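/- Let a, b, λ ∈ ℝ with a ≠ 0 and b ≠ 0. For x ∈ ℝ and y > 0, set r (x, y) = x^2 + y^(2*a/b) (real power) and define gA (x, y) = (r (x, y))^(λ/(2*a)) and gB (x, y) = x * (r (x, y))^(λ/(2*a) − 1/2). Then both gA and gB satisfy the Koopman eigenfunction identity for the same eigenvalue λ: for all t ∈ ℝ, x ∈ ℝ, y > 0, gA (Real.exp (a*t) * x, Real.exp (b*t) * y) = Real.exp (λ*t) * gA (x, y) and gB (Real.exp (a*t) * x, Real.exp (b*t) * y) = Real.exp (λ*t) * gB (x, y); moreover gA and gB are not proportional: there is no constant c ∈ ℝ such that gB (x, y) = c * gA (x, y) for all x ∈ ℝ and y > 0. Hence the eigenvalue λ of the Koopman operator of the flow S_t(x,y) = (e^{at} x, e^{bt} y) has geometric multiplicity greater than one. (Appendix C of the paper: the choices g₀ ≡ 1 and g₀(u,v) = u give genuinely different eigenfunctions for the same eigenvalue, the obstruction to spectral matching.) -/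

import Mathlib

lemma exp_rpow' (u v : ℝ) : (Real.exp u) ^ v = Real.exp (u * v) := by
  rw [Real.rpow_def_of_pos (Real.exp_pos u), Real.log_exp]

/-- Appendix C of the paper: the two choices of initial data g₀ ≡ 1 and g₀(u,v) = u give
Koopman eigenfunctions gA and gB of the flow S_t(x,y) = (e^{at} x, e^{bt} y) with the same
eigenvalue λ that are not proportional; hence λ has geometric multiplicity greater than
one. -/
theorem diagonal_linear_nontrivial_geometric_multiplicity
    (a b lam : ℝ) (ha : a ≠ 0) (hb : b ≠ 0)
    (r gA gB : ℝ → ℝ → ℝ)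
    (hr : ∀ x y : ℝ, r x y = x^2 + y^(2*a/b))
    (hgA : ∀ x y : ℝ, gA x y = (r x y)^(lam/(2*a)))
    (hgB : ∀ x y : ℝ, gB x y = x * (r x y)^(lam/(2*a) - (1:ℝ)/2)) :
    (∀ (t x y : ℝ), 0 < y →
      gA (Real.exp (a*t) * x) (Real.exp (b*t) * y) = Real.exp (lam*t) * gA x y) ∧
    (∀ (t x y : ℝ), 0 < y →
      gB (Real.exp (a*t) * x) (Real.exp (b*t) * y) = Real.exp (lam*t) * gB x y) ∧
    ¬ ∃ c : ℝ, ∀ (x y : ℝ), 0 < y → gB x y = c * gA x y := by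
  have hrpos : ∀ x y : ℝ, 0 < y → 0 < r x y := by
    intro x y hy
    rw [hr]
    positivity
  have hscale : ∀ t x y : ℝ, 0 < y →
      r (Real.exp (a*t) * x) (Real.exp (b*t) * y) = Real.exp (2*a*t) * r x y := by
    intro t x y hy
    rw [hr, hr]
    rw [Real.mul_rpow (Real.exp_pos _).le hy.le, exp_rpow']
    rw [mul_pow, ← Real.exp_nat_mul]
    have h1 : (2:ℝ) * (a * t) = 2 * a * t := by ring
    have h2 : b * t * (2 * a / b) = 2 * a * t := by field_simp
    push_cast
    rw [h1, h2, mul_add]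
  refine ⟨?_, ?_, ?_⟩
  · intro t x y hy
    rw [hgA, hgA, hscale t x y hy,
      Real.mul_rpow (Real.exp_pos _).le (hrpos x y hy).le, exp_rpow']
    have : 2 * a * t * (lam / (2 * a)) = lam * t := by field_simp
    rw [this]
  · intro t x y hy
    rw [hgB, hgB, hscale t x y hy,
      Real.mul_rpow (Real.exp_pos _).le (hrpos x y hy).le, exp_rpow']
    have h3 : a * t + 2 * a * t * (lam / (2 * a) - 1/2) = lam * t := by field_simp; ring
    rw [show Real.exp (a*t) * x * (Real.exp (2*a*t*(lam/(2*a) - 1/2)) * r x y ^ (lam/(2*a) - (1:ℝ)/2))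
        = Real.exp (a*t) * Real.exp (2*a*t*(lam/(2*a) - 1/2)) * (x * r x y ^ (lam/(2*a) - (1:ℝ)/2)) from by
      ring, ← Real.exp_add, h3]
  · rintro ⟨c, hc⟩
    have h0 := hc 0 1 one_pos
    have h1 := hc 1 1 one_pos
    have hr01 : r 0 1 = 1 := by rw [hr]; simp
    have hr11 : r 1 1 = 2 := by rw [hr]; norm_num
    rw [hgB, hgA, hr01] at h0
    simp [Real.one_rpow] at h0
    rw [hgB, hgA, hr11, ← h0, zero_mul, one_mul] at h1
    exact (Real.rpow_pos_of_pos two_pos _).ne' h1
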